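/- Fix a Clifford system, σ ∈ su(2) with ⟨σ, σ⟩ = 1, and R > 0. Let ad σ denote the map v ↦ σv − vσ on sl(2,ℂ), and for t ∈ ℝ let A_t = (1/√2) R (ρ₃ ⊗ ad σ) − (t/2)(Γ ⊗ id) acting on ℂ⁸ ⊗ sl(2,ℂ). Then for t > 0 the operator A_t has nontrivial kernel if and only if t = 2√2 R; and when t = 2√2 R, every element of the kernel can be written as ψ₊ + ψ₋ where (Γ ⊗ id) ψ₊ = ψ₊ and (ρ₃ ⊗ ad σ) ψ₊ = 2 ψ₊, while (Γ ⊗ id) ψ₋ = −ψ₋ and (ρ₃ ⊗ ad σ) ψ₋ = −2 ψ₋. -/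
import Mathlib


open Matrix

/-- A *Clifford system*: real antisymmetric 8×8 matrices `γ₁,…,γ₄, ρ₁, ρ₂, ρ₃` and a
symmetric `Γ` obeying the algebraic relations (3.5) of the paper. -/
structure CliffordSystem where
  γ : Fin 4 → Matrix (Fin 8) (Fin 8) ℝ
  ρ : Fin 3 → Matrix (Fin 8) (Fin 8) ℝ
  Γ : Matrix (Fin 8) (Fin 8) ℝ
  γ_antisymm : ∀ α, (γ α)ᵀ = -(γ α)
  ρ_antisymm : ∀ j, (ρ j)ᵀ = -(ρ j)
  Γ_symm : Γᵀ = Γ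
  γγ : ∀ α β, γ α * γ β + γ β * γ α =
    if α = β then (-2 : ℝ) • (1 : Matrix (Fin 8) (Fin 8) ℝ) else 0
  ρρ : ∀ j k, ρ j * ρ k + ρ k * ρ j =
    if j = k then (-2 : ℝ) • (1 : Matrix (Fin 8) (Fin 8) ℝ) else 0
  ργ : ∀ j α, ρ j * γ α + γ α * ρ j = 0
  Γγ : ∀ α, Γ * γ α + γ α * Γ = 0
  Γρ : ∀ j, Γ * ρ j = ρ j * Γ
  Γsq : Γ * Γ = 1

/-- The `γ` matrices acting ℂ-linearly on `ℂ⁸`. -/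
noncomputable def CliffordSystem.γC (C : CliffordSystem) (α : Fin 4) :
    Matrix (Fin 8) (Fin 8) ℂ :=
  (C.γ α).map (fun r => (r : ℂ))

/-- The `ρ` matrices acting ℂ-linearly on `ℂ⁸`. -/
noncomputable def CliffordSystem.ρC (C : CliffordSystem) (j : Fin 3) :
    Matrix (Fin 8) (Fin 8) ℂ :=
  (C.ρ j).map (fun r => (r : ℂ))

/-- The matrix `Γ` acting ℂ-linearly on `ℂ⁸`. -/
noncomputable def CliffordSystem.ΓC (C : CliffordSystem) : Matrix (Fin 8) (Fin 8) ℂ :=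
  C.Γ.map (fun r => (r : ℂ))

/-- The action of `ρ₃ ⊗ ad σ` on `ℂ⁸ ⊗ sl(2,ℂ)`, realised on `sl(2,ℂ)`-valued 8-vectors. -/
noncomputable def rhoAd (C : CliffordSystem) (σ : Matrix (Fin 2) (Fin 2) ℂ)
    (v : Fin 8 → Matrix (Fin 2) (Fin 2) ℂ) : Fin 8 → Matrix (Fin 2) (Fin 2) ℂ :=
  fun i => ∑ j : Fin 8, C.ρC 2 i j • (σ * v j - v j * σ)

/-- The action of `Γ ⊗ id` on `ℂ⁸ ⊗ sl(2,ℂ)`, realised on `sl(2,ℂ)`-valued 8-vectors. -/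
noncomputable def gammaId (C : CliffordSystem)
    (v : Fin 8 → Matrix (Fin 2) (Fin 2) ℂ) : Fin 8 → Matrix (Fin 2) (Fin 2) ℂ :=
  fun i => ∑ j : Fin 8, C.ΓC i j • v j

/-- The operator `A_t = (1/√2) R (ρ₃ ⊗ ad σ) − (t/2)(Γ ⊗ id)` on `ℂ⁸ ⊗ sl(2,ℂ)`. -/
noncomputable def Aop (C : CliffordSystem) (σ : Matrix (Fin 2) (Fin 2) ℂ) (R t : ℝ)
    (v : Fin 8 → Matrix (Fin 2) (Fin 2) ℂ) : Fin 8 → Matrix (Fin 2) (Fin 2) ℂ :=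
  ((R / Real.sqrt 2 : ℝ) : ℂ) • rhoAd C σ v - ((t / 2 : ℝ) : ℂ) • gammaId C v


namespace Stmt19Aux

noncomputable def coeC (A : Matrix (Fin 8) (Fin 8) ℝ) : Matrix (Fin 8) (Fin 8) ℂ :=
  A.map (fun r => (r : ℂ))

lemma coeC_mul (A B : Matrix (Fin 8) (Fin 8) ℝ) : coeC (A * B) = coeC A * coeC B := by
  ext i j; simp [coeC, Matrix.mul_apply]

lemma coeC_one : coeC 1 = 1 := by
  ext i j; simp [coeC, Matrix.one_apply]; split <;> simp

lemma coeC_neg (A : Matrix (Fin 8) (Fin 8) ℝ) : coeC (-A) = - coeC A := by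
  ext i j; simp [coeC]

noncomputable def opApply (A : Matrix (Fin 8) (Fin 8) ℂ)
    (f : Matrix (Fin 2) (Fin 2) ℂ →ₗ[ℂ] Matrix (Fin 2) (Fin 2) ℂ)
    (v : Fin 8 → Matrix (Fin 2) (Fin 2) ℂ) : Fin 8 → Matrix (Fin 2) (Fin 2) ℂ :=
  fun i => ∑ j, A i j • f (v j)

lemma opApply_opApply (A B : Matrix (Fin 8) (Fin 8) ℂ)
    (f g : Matrix (Fin 2) (Fin 2) ℂ →ₗ[ℂ] Matrix (Fin 2) (Fin 2) ℂ)
    (v : Fin 8 → Matrix (Fin 2) (Fin 2) ℂ) :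
    opApply A f (opApply B g v) = opApply (A * B) (f.comp g) v := by
  funext i
  simp only [opApply, map_sum, _root_.map_smul, Finset.smul_sum, smul_smul, Matrix.mul_apply,
    Finset.sum_smul, LinearMap.comp_apply]
  rw [Finset.sum_comm]

lemma opApply_one (v : Fin 8 → Matrix (Fin 2) (Fin 2) ℂ) :
    opApply 1 LinearMap.id v = v := by
  funext i; simp [opApply, Matrix.one_apply]

lemma opApply_neg_one (f : Matrix (Fin 2) (Fin 2) ℂ →ₗ[ℂ] Matrix (Fin 2) (Fin 2) ℂ)
    (v : Fin 8 → Matrix (Fin 2) (Fin 2) ℂ) :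
    opApply (-1) f v = fun i => -(f (v i)) := by
  funext i
  simp [opApply, Matrix.neg_apply, Matrix.one_apply, ite_smul, Finset.sum_ite_eq]

lemma opApply_smulv (A : Matrix (Fin 8) (Fin 8) ℂ)
    (f : Matrix (Fin 2) (Fin 2) ℂ →ₗ[ℂ] Matrix (Fin 2) (Fin 2) ℂ) (a : ℂ)
    (v : Fin 8 → Matrix (Fin 2) (Fin 2) ℂ) :
    opApply A f (a • v) = a • opApply A f v := by
  funext i
  simp [opApply, _root_.map_smul, Finset.smul_sum, smul_smul, mul_comm]

lemma opApply_addv (A : Matrix (Fin 8) (Fin 8) ℂ)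
    (f : Matrix (Fin 2) (Fin 2) ℂ →ₗ[ℂ] Matrix (Fin 2) (Fin 2) ℂ)
    (v w : Fin 8 → Matrix (Fin 2) (Fin 2) ℂ) :
    opApply A f (v + w) = opApply A f v + opApply A f w := by
  funext i
  simp [opApply, map_add, smul_add, Finset.sum_add_distrib]

lemma opApply_subv (A : Matrix (Fin 8) (Fin 8) ℂ)
    (f : Matrix (Fin 2) (Fin 2) ℂ →ₗ[ℂ] Matrix (Fin 2) (Fin 2) ℂ)
    (v w : Fin 8 → Matrix (Fin 2) (Fin 2) ℂ) :
    opApply A f (v - w) = opApply A f v - opApply A f w := by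
  funext i
  simp [opApply, map_sub, smul_sub, Finset.sum_sub_distrib]

noncomputable def adL (σ : Matrix (Fin 2) (Fin 2) ℂ) :
    Matrix (Fin 2) (Fin 2) ℂ →ₗ[ℂ] Matrix (Fin 2) (Fin 2) ℂ where
  toFun m := σ * m - m * σ
  map_add' a b := by noncomm_ring
  map_smul' c a := by simp [Matrix.mul_smul, Matrix.smul_mul, smul_sub]

lemma adL_apply (σ m : Matrix (Fin 2) (Fin 2) ℂ) : adL σ m = σ * m - m * σ := rfl

lemma adL_adL (σ : Matrix (Fin 2) (Fin 2) ℂ) (hsq : σ * σ = -1)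
    (m : Matrix (Fin 2) (Fin 2) ℂ) :
    adL σ (adL σ m) = (-2 : ℂ) • m - (2 : ℂ) • (σ * m * σ) := by
  have h1 : σ * (σ * m) = -m := by rw [← mul_assoc, hsq]; simp
  have h2 : m * (σ * σ) = -m := by rw [hsq]; simp
  simp only [adL_apply, mul_sub, sub_mul, mul_assoc, h1, h2]
  rw [neg_smul, two_smul, two_smul]
  abel

lemma column_eig {n : Type*} [Fintype n] [DecidableEq n] {K : Type*} [Field K]
    (M N : Matrix n n K) (a : K) (h : M * N = a • N) (hN : N ≠ 0) :
    ∃ ξ : n → K, ξ ≠ 0 ∧ M.mulVec ξ = a • ξ := by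
  obtain ⟨i0, j0, hij⟩ : ∃ i j, N i j ≠ 0 := by
    by_contra h'
    push_neg at h'
    exact hN (by ext i j; simpa using h' i j)
  refine ⟨fun k => N k j0, fun h0 => hij (congrFun h0 i0), ?_⟩
  funext k
  have hk := congrFun (congrFun h k) j0
  simpa [Matrix.mul_apply, Matrix.mulVec, dotProduct, Matrix.smul_apply] using hk

lemma sigma_sq (σ : Matrix (Fin 2) (Fin 2) ℂ) (hσt : σ.trace = 0)
    (hσσ : -(1 / 2 : ℂ) * (σ * σ).trace = 1) : σ * σ = -1 := by
  obtain ⟨a, b, c, d, hσ⟩ : ∃ a b c d, σ = !![a, b; c, d] :=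
    ⟨_, _, _, _, Matrix.eta_fin_two σ⟩
  subst hσ
  rw [Matrix.mul_fin_two] at hσσ ⊢
  simp only [Matrix.trace_fin_two_of] at hσt hσσ
  have hd : d = -a := by linear_combination hσt
  subst hd
  have h2 : a * a + b * c = -1 := by linear_combination -hσσ
  ext i j
  fin_cases i <;> fin_cases j <;> simp <;>
    first | linear_combination h2 | linear_combination -h2 |
      linear_combination (2:ℂ)*h2 | linear_combination (-2:ℂ)*h2 | linear_combination (0:ℂ)*h2

/-- Existence of a traceless rank-one eigenvector of `ad σ` with eigenvalue `2i`. -/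
lemma exists_e (σ : Matrix (Fin 2) (Fin 2) ℂ) (hσa : σᴴ = -σ) (hσt : σ.trace = 0)
    (hsq : σ * σ = -1) :
    ∃ e : Matrix (Fin 2) (Fin 2) ℂ, e ≠ 0 ∧ e.trace = 0 ∧
      σ * e - e * σ = (2 * Complex.I) • e := by
  -- eigenvector ξ with σ ξ = i ξ
  have hP : σ + Complex.I • (1 : Matrix (Fin 2) (Fin 2) ℂ) ≠ 0 := by
    intro h
    have ht : (σ + Complex.I • (1 : Matrix (Fin 2) (Fin 2) ℂ)).trace = 0 := by rw [h]; simp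
    rw [Matrix.trace_add, hσt, Matrix.trace_smul] at ht
    simp [Matrix.trace_one] at ht
  have hQ : σ - Complex.I • (1 : Matrix (Fin 2) (Fin 2) ℂ) ≠ 0 := by
    intro h
    have ht : (σ - Complex.I • (1 : Matrix (Fin 2) (Fin 2) ℂ)).trace = 0 := by rw [h]; simp
    rw [Matrix.trace_sub, hσt, Matrix.trace_smul] at ht
    simp [Matrix.trace_one] at ht
  obtain ⟨ξ, hξ0, hξ⟩ := column_eig σ (σ + Complex.I • 1) Complex.I
    (by rw [mul_add, hsq, smul_add, smul_smul, Complex.I_mul_I]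
        simp [Matrix.mul_smul]
        abel) hP
  obtain ⟨η, hη0, hη⟩ := column_eig σ (σ - Complex.I • 1) (-Complex.I)
    (by rw [mul_sub, hsq, smul_sub, smul_smul]
        simp [Matrix.mul_smul, Complex.I_mul_I]
        abel) hQ
  -- star η is a left eigenvector
  have hvm : star η ᵥ* σ = (-Complex.I) • star η := by
    have h1 : σᴴ *ᵥ η = Complex.I • η := by
      rw [hσa, Matrix.neg_mulVec, hη]
      simp
    have h2 : star (σᴴ *ᵥ η) = star η ᵥ* σ := by
      rw [Matrix.star_mulVec, Matrix.conjTranspose_conjTranspose]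
    rw [← h2, h1, star_smul]
    simp [Complex.star_def, Complex.conj_I]
  -- orthogonality
  have hs0 : star η ⬝ᵥ ξ = 0 := by
    have d1 : star η ⬝ᵥ (σ *ᵥ ξ) = Complex.I * (star η ⬝ᵥ ξ) := by
      rw [hξ, dotProduct_smul]; simp
    have d2 : star η ⬝ᵥ (σ *ᵥ ξ) = -Complex.I * (star η ⬝ᵥ ξ) := by
      rw [Matrix.dotProduct_mulVec, hvm, smul_dotProduct]; simp
    have := d1.symm.trans d2
    have hI : (Complex.I - -Complex.I) ≠ 0 := by
      simp [Complex.I_ne_zero, two_mul]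
    have : (Complex.I - -Complex.I) * (star η ⬝ᵥ ξ) = 0 := by ring_nf; linear_combination this
    rcases mul_eq_zero.mp this with h | h
    · exact absurd h hI
    · exact h
  refine ⟨Matrix.of fun i j => ξ i * star (η j), ?_, ?_, ?_⟩
  · obtain ⟨i1, hi1⟩ := Function.ne_iff.mp hξ0
    obtain ⟨j1, hj1⟩ := Function.ne_iff.mp hη0
    intro h
    have := congrFun (congrFun h i1) j1
    simp only [Matrix.of_apply, Matrix.zero_apply] at this
    rcases mul_eq_zero.mp this with h' | h'
    · exact hi1 (by simpa using h')
    · exact hj1 (by simpa using h')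
  · have : (Matrix.of fun i j => ξ i * star (η j)).trace = star η ⬝ᵥ ξ := by
      simp [Matrix.trace, Matrix.diag, dotProduct, mul_comm]
    rw [this, hs0]
  · have hξ' : ∀ i, ∑ k, σ i k * ξ k = Complex.I * ξ i := by
      intro i
      have := congrFun hξ i
      simpa [Matrix.mulVec, dotProduct] using this
    have hη' : ∀ j, ∑ k, star (η k) * σ k j = -Complex.I * star (η j) := by
      intro j
      have := congrFun hvm j
      simpa [Matrix.vecMul, dotProduct] using this
    ext i j
    simp only [Matrix.sub_apply, Matrix.mul_apply, Matrix.smul_apply, Matrix.of_apply,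
      smul_eq_mul]
    have e1 : ∑ k, σ i k * (ξ k * star (η j)) = (∑ k, σ i k * ξ k) * star (η j) := by
      rw [Finset.sum_mul]
      exact Finset.sum_congr rfl fun k _ => by ring
    have e2 : ∑ k, (ξ i * star (η k)) * σ k j = ξ i * ∑ k, star (η k) * σ k j := by
      rw [Finset.mul_sum]
      exact Finset.sum_congr rfl fun k _ => by ring
    rw [e1, e2, hξ' i, hη' j]
    ring

end Stmt19Aux

open Stmt19Aux

/-- the kernel analysis of (3.15)–(3.17) and (3.32).  For a unit
`σ ∈ su(2)` and `R > 0`: for `t > 0` the operator `A_t` on `ℂ⁸ ⊗ sl(2,ℂ)` has nontrivial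
kernel iff `t = 2√2 R`; and at `t = 2√2 R` every kernel element splits as `ψ₊ + ψ₋` with
`(Γ⊗id)ψ₊ = ψ₊`, `(ρ₃⊗adσ)ψ₊ = 2ψ₊`, `(Γ⊗id)ψ₋ = −ψ₋`, `(ρ₃⊗adσ)ψ₋ = −2ψ₋`. -/
theorem Aop_kernel (C : CliffordSystem) (σ : Matrix (Fin 2) (Fin 2) ℂ)
    (hσa : σᴴ = -σ) (hσt : σ.trace = 0)
    (hσσ : -(1 / 2 : ℂ) * (σ * σ).trace = 1)
    (R : ℝ) (hR : 0 < R) :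
    (∀ t : ℝ, 0 < t →
      ((∃ v : Fin 8 → Matrix (Fin 2) (Fin 2) ℂ,
          (∀ i, (v i).trace = 0) ∧ v ≠ 0 ∧ Aop C σ R t v = 0)
        ↔ t = 2 * Real.sqrt 2 * R)) ∧
    (∀ v : Fin 8 → Matrix (Fin 2) (Fin 2) ℂ, (∀ i, (v i).trace = 0) →
      Aop C σ R (2 * Real.sqrt 2 * R) v = 0 →
      ∃ ψp ψm : Fin 8 → Matrix (Fin 2) (Fin 2) ℂ,
        v = ψp + ψm ∧
        (∀ i, (ψp i).trace = 0) ∧ (∀ i, (ψm i).trace = 0) ∧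
        gammaId C ψp = ψp ∧ rhoAd C σ ψp = (2 : ℂ) • ψp ∧
        gammaId C ψm = -ψm ∧ rhoAd C σ ψm = (-2 : ℂ) • ψm) := by
  classical
  have hsq : σ * σ = -1 := sigma_sq σ hσt hσσ
  set s : ℝ := Real.sqrt 2 with hs_def
  have hs2 : s * s = 2 := Real.mul_self_sqrt (by norm_num)
  have hs0 : (0:ℝ) < s := Real.sqrt_pos.2 (by norm_num)
  have hsne : s ≠ 0 := ne_of_gt hs0
  have hRne : R ≠ 0 := ne_of_gt hR
  -- real Clifford facts
  have hρρR : C.ρ 2 * C.ρ 2 = -1 := by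
    have h := C.ρρ 2 2
    rw [if_pos rfl] at h
    have h2 : (2:ℝ) • (C.ρ 2 * C.ρ 2) = (2:ℝ) • (-1 : Matrix (Fin 8) (Fin 8) ℝ) := by
      rw [two_smul, h]
      ext i j
      simp [Matrix.smul_apply, Matrix.one_apply]
      split <;> norm_num
    exact smul_right_injective _ (two_ne_zero) h2
  -- complex Clifford facts
  have hρρ : C.ρC 2 * C.ρC 2 = -1 := by
    rw [show C.ρC 2 = coeC (C.ρ 2) from rfl, ← coeC_mul, hρρR, coeC_neg, coeC_one]
  have hΓΓ : C.ΓC * C.ΓC = 1 := by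
    rw [show C.ΓC = coeC C.Γ from rfl, ← coeC_mul, C.Γsq, coeC_one]
  have hΓρ : C.ΓC * C.ρC 2 = C.ρC 2 * C.ΓC := by
    rw [show C.ΓC = coeC C.Γ from rfl, show C.ρC 2 = coeC (C.ρ 2) from rfl,
      ← coeC_mul, ← coeC_mul, C.Γρ 2]
  -- operator facts
  have hMdef : ∀ v, rhoAd C σ v = opApply (C.ρC 2) (adL σ) v := fun v => rfl
  have hGdef : ∀ v, gammaId C v = opApply C.ΓC LinearMap.id v := fun v => rfl
  have hGG : ∀ v, gammaId C (gammaId C v) = v := by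
    intro v
    rw [hGdef, hGdef, opApply_opApply, hΓΓ, LinearMap.id_comp, opApply_one]
  have hMG : ∀ v, rhoAd C σ (gammaId C v) = gammaId C (rhoAd C σ v) := by
    intro v
    rw [hMdef, hGdef v, opApply_opApply, hGdef, hMdef, opApply_opApply, ← hΓρ,
      LinearMap.comp_id, LinearMap.id_comp]
  have hM2 : ∀ v, rhoAd C σ (rhoAd C σ v)
      = fun i => (2:ℂ) • v i + (2:ℂ) • (σ * v i * σ) := by
    intro v
    rw [hMdef, hMdef, opApply_opApply, hρρ, opApply_neg_one]
    funext i
    rw [LinearMap.comp_apply, adL_adL σ hsq]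
    rw [neg_sub, neg_smul, sub_neg_eq_add]
    abel
  have hMsm : ∀ (a : ℂ) v, rhoAd C σ (a • v) = a • rhoAd C σ v := by
    intro a v; rw [hMdef, opApply_smulv, hMdef]
  have hGsm : ∀ (a : ℂ) v, gammaId C (a • v) = a • gammaId C v := by
    intro a v; rw [hGdef, opApply_smulv, hGdef]
  have hMadd : ∀ v w, rhoAd C σ (v + w) = rhoAd C σ v + rhoAd C σ w := by
    intro v w; rw [hMdef, opApply_addv, hMdef, hMdef]
  have hGadd : ∀ v w, gammaId C (v + w) = gammaId C v + gammaId C w := by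
    intro v w; rw [hGdef, opApply_addv, hGdef, hGdef]
  have hMsub : ∀ v w, rhoAd C σ (v - w) = rhoAd C σ v - rhoAd C σ w := by
    intro v w; rw [hMdef, opApply_subv, hMdef, hMdef]
  have hGsub : ∀ v w, gammaId C (v - w) = gammaId C v - gammaId C w := by
    intro v w; rw [hGdef, opApply_subv, hGdef, hGdef]
  have hGtr : ∀ v, (∀ i, (v i).trace = 0) → ∀ i, ((gammaId C v) i).trace = 0 := by
    intro v hv i
    rw [hGdef]
    show (∑ j, C.ΓC i j • v j).trace = 0
    rw [Matrix.trace_sum]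
    refine Finset.sum_eq_zero fun j _ => ?_
    rw [Matrix.trace_smul, hv j, smul_zero]
  have hcne : ((R / s : ℝ) : ℂ) ≠ 0 := by
    simp only [ne_eq, Complex.ofReal_eq_zero]
    positivity
  -- the kernel equation
  have hker : ∀ (t : ℝ) v, Aop C σ R t v = 0 →
      rhoAd C σ v = (((R / s : ℝ):ℂ)⁻¹ * ((t/2 : ℝ):ℂ)) • gammaId C v := by
    intro t v h
    have h1 : ((R / s : ℝ):ℂ) • rhoAd C σ v - ((t/2 : ℝ):ℂ) • gammaId C v = 0 := h
    rw [sub_eq_zero] at h1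
    have h2 := congrArg (fun w => ((R / s : ℝ):ℂ)⁻¹ • w) h1
    simp only [smul_smul, inv_mul_cancel₀ hcne, one_smul] at h2
    exact h2
  -- the eigenvector construction
  have hconstr : ∃ v : Fin 8 → Matrix (Fin 2) (Fin 2) ℂ,
      (∀ i, (v i).trace = 0) ∧ v ≠ 0 ∧
      rhoAd C σ v = (2:ℂ) • v ∧ gammaId C v = v := by
    obtain ⟨e, he0, hetr, he⟩ := exists_e σ hσa hσt hsq
    -- a real fixed vector of Γ
    have hγ1 : C.γ 0 ≠ 0 := by
      intro h
      have h2 := C.γγ 0 0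
      rw [if_pos rfl, h] at h2
      have h3 := congrFun (congrFun h2 0) 0
      simp [Matrix.smul_apply, Matrix.one_apply] at h3
    have hΓne : (1 : Matrix (Fin 8) (Fin 8) ℝ) + C.Γ ≠ 0 := by
      intro h
      have hΓ : C.Γ = -1 := by
        have := neg_eq_of_add_eq_zero_right h
        rw [← this]
      have h3 := C.Γγ 0
      rw [hΓ] at h3
      have h4 : C.γ 0 = 0 := by
        have h5 : -(C.γ 0) + -(C.γ 0) = 0 := by
          simpa [Matrix.neg_mul, Matrix.mul_neg] using h3
        have h6 := congrArg (fun m => -m) h5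
        have h7 : C.γ 0 + C.γ 0 = 0 := by simpa using h6
        have h8 : (2:ℝ) • C.γ 0 = (2:ℝ) • (0 : Matrix (Fin 8) (Fin 8) ℝ) := by
          rw [two_smul, smul_zero]; exact h7
        exact smul_right_injective _ two_ne_zero h8
      exact hγ1 h4
    obtain ⟨ur, hur0, hΓur⟩ := column_eig C.Γ (1 + C.Γ) (1:ℝ)
      (by rw [mul_add, C.Γsq, mul_one, one_smul]; abel) hΓne
    rw [one_smul] at hΓur
    set pu : Fin 8 → ℝ := (C.ρ 2).mulVec ur with hpu_def
    have hΓpu : C.Γ.mulVec pu = pu := by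
      rw [hpu_def, Matrix.mulVec_mulVec, C.Γρ 2, ← Matrix.mulVec_mulVec, hΓur]
    have hρpu : (C.ρ 2).mulVec pu = -ur := by
      rw [hpu_def, Matrix.mulVec_mulVec, hρρR, Matrix.neg_mulVec, Matrix.one_mulVec]
    set x : Fin 8 → ℂ := fun k => ((ur k : ℝ) : ℂ) + Complex.I * ((pu k : ℝ) : ℂ)
      with hx_def
    have castsum : ∀ (A : Matrix (Fin 8) (Fin 8) ℝ) (w : Fin 8 → ℝ) (i : Fin 8),
        ∑ j, ((A i j : ℝ):ℂ) * ((w j : ℝ):ℂ) = ((A.mulVec w i : ℝ) : ℂ) := by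
      intro A w i
      rw [Matrix.mulVec, dotProduct]
      push_cast
      rfl
    have hsplit : ∀ (A : Matrix (Fin 8) (Fin 8) ℝ) (i : Fin 8),
        ∑ j, ((A i j : ℝ):ℂ) * x j
          = ((A.mulVec ur i : ℝ) : ℂ) + Complex.I * ((A.mulVec pu i : ℝ):ℂ) := by
      intro A i
      rw [← castsum A ur i, ← castsum A pu i, Finset.mul_sum, ← Finset.sum_add_distrib]
      refine Finset.sum_congr rfl fun j _ => ?_
      rw [hx_def]
      ring
    have hGx : ∀ i, ∑ j, C.ΓC i j * x j = x i := by
      intro i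
      have : ∀ j, C.ΓC i j = ((C.Γ i j : ℝ):ℂ) := fun j => rfl
      simp_rw [this]
      rw [hsplit C.Γ i, hΓur, hΓpu, hx_def]
    have hρx : ∀ i, ∑ j, C.ρC 2 i j * x j = -Complex.I * x i := by
      intro i
      have : ∀ j, C.ρC 2 i j = ((C.ρ 2 i j : ℝ):ℂ) := fun j => rfl
      simp_rw [this]
      rw [hsplit (C.ρ 2) i, ← hpu_def, hρpu, hx_def]
      push_cast
      simp only [Pi.neg_apply]
      push_cast
      linear_combination ((pu i : ℝ):ℂ) * Complex.I_mul_I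
    obtain ⟨i0, hi0⟩ := Function.ne_iff.mp hur0
    simp only [Pi.zero_apply] at hi0
    have hx0 : x ≠ 0 := by
      intro h
      have := congrFun h i0
      rw [hx_def] at this
      simp only [Pi.zero_apply] at this
      have hre := congrArg Complex.re this
      simp [Complex.add_re, Complex.mul_re] at hre
      exact hi0 hre
    refine ⟨fun i => x i • e, fun i => by rw [Matrix.trace_smul, hetr, smul_zero], ?_, ?_, ?_⟩
    · intro h
      obtain ⟨i1, hi1⟩ := Function.ne_iff.mp hx0
      simp only [Pi.zero_apply] at hi1
      have := congrFun h i1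
      simp only [Pi.zero_apply] at this
      rcases smul_eq_zero.mp this with h' | h'
      · exact hi1 h'
      · exact he0 h'
    · funext i
      show ∑ j, C.ρC 2 i j • (σ * (x j • e) - (x j • e) * σ) = ((2:ℂ) • fun i => x i • e) i
      have step : ∀ j, C.ρC 2 i j • (σ * (x j • e) - (x j • e) * σ)
          = (C.ρC 2 i j * x j * (2 * Complex.I)) • e := by
        intro j
        rw [Matrix.mul_smul, Matrix.smul_mul, ← smul_sub, he, smul_smul, smul_smul]
      rw [Finset.sum_congr rfl fun j _ => step j]
      rw [show (∑ j, (C.ρC 2 i j * x j * (2 * Complex.I)) • e)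
          = ((∑ j, C.ρC 2 i j * x j) * (2 * Complex.I)) • e by
        rw [Finset.sum_mul, Finset.sum_smul]]
      rw [hρx i]
      simp only [Pi.smul_apply]
      rw [smul_smul]
      congr 1
      linear_combination (-2 * x i) * Complex.I_mul_I
    · funext i
      show ∑ j, C.ΓC i j • (x j • e) = x i • e
      have step : ∀ j, C.ΓC i j • (x j • e) = (C.ΓC i j * x j) • e := fun j => smul_smul _ _ _
      rw [Finset.sum_congr rfl fun j _ => step j, ← Finset.sum_smul, hGx i]
  constructor
  · intro t ht
    constructor
    · rintro ⟨v, htr, hv0, hAv⟩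
      set μ : ℂ := ((R / s : ℝ):ℂ)⁻¹ * ((t/2 : ℝ):ℂ) with hμ_def
      have hμv : rhoAd C σ v = μ • gammaId C v := hker t v hAv
      have h2 : rhoAd C σ (rhoAd C σ v) = (μ * μ) • v := by
        rw [hμv, hMsm, hMG, hμv, hGsm, hGG, smul_smul]
      obtain ⟨i, hvi⟩ := Function.ne_iff.mp hv0
      simp only [Pi.zero_apply] at hvi
      set w := v i with hw_def
      have h3 : (μ * μ) • w = (2:ℂ) • w + (2:ℂ) • (σ * w * σ) := by
        have := congrFun ((hM2 v).symm.trans h2) i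
        simpa using this.symm
      have h4 : (μ * μ) • (σ * w * σ) = (2:ℂ) • (σ * w * σ) + (2:ℂ) • w := by
        have hc := congrArg (fun m => σ * m * σ) h3
        simp only [Matrix.mul_smul, Matrix.smul_mul, Matrix.mul_add, Matrix.add_mul] at hc
        have hw2 : σ * (σ * w * σ) * σ = w := by
          rw [show σ * (σ * w * σ) * σ = (σ * σ) * w * (σ * σ) by noncomm_ring, hsq]
          simp
        rw [hw2] at hc
        exact hc
      have h5 : (μ * μ) • (w - σ * w * σ) = 0 := by
        rw [smul_sub, h3, h4]
        abel
      have hμ0 : μ ≠ 0 := by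
        rw [hμ_def]
        apply mul_ne_zero (inv_ne_zero hcne)
        simp only [ne_eq, Complex.ofReal_eq_zero]
        positivity
      have h6 : w = σ * w * σ := by
        rcases smul_eq_zero.mp h5 with h | h
        · exact absurd (mul_self_eq_zero.mp h) hμ0
        · exact (sub_eq_zero.mp h)
      have h8 : μ * μ = 4 := by
        have h7 : ((μ * μ) - 4) • w = 0 := by
          rw [sub_smul, h3, ← h6]
          have : (4:ℂ) • w = (2:ℂ) • w + (2:ℂ) • w := by
            rw [← add_smul]; norm_num
          rw [this]
          abel
        rcases smul_eq_zero.mp h7 with h | h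
        · exact sub_eq_zero.mp h
        · exact absurd h hvi
      -- μ is the coercion of a positive real
      have hμre : μ = (((R / s)⁻¹ * (t/2) : ℝ) : ℂ) := by
        rw [hμ_def]
        push_cast
        ring
      have h9 : ((R / s)⁻¹ * (t/2)) * ((R / s)⁻¹ * (t/2)) = 4 := by
        have : ((((R / s)⁻¹ * (t/2) : ℝ) : ℂ)) * (((R / s)⁻¹ * (t/2) : ℝ) : ℂ) = 4 := by
          rw [← hμre]; exact h8
        exact_mod_cast this
      have hm_pos : 0 < (R / s)⁻¹ * (t/2) := by positivity
      have hm2 : (R / s)⁻¹ * (t/2) = 2 := by nlinarith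
      rw [show (R / s)⁻¹ = s / R by rw [inv_div]] at hm2
      field_simp at hm2
      -- hm2 : s * t = 2 * (2 * R) or similar
      nlinarith [hs2, hs0, hR]
    · intro hteq
      obtain ⟨v, htr, hv0, hMv, hGv⟩ := hconstr
      refine ⟨v, htr, hv0, ?_⟩
      show ((R / Real.sqrt 2 : ℝ):ℂ) • rhoAd C σ v - ((t/2 : ℝ):ℂ) • gammaId C v = 0
      rw [hMv, hGv, smul_smul, hteq]
      rw [sub_eq_zero]
      congr 1
      rw [← hs_def]
      have hcoR : (R / s) * 2 = 2 * s * R / 2 := by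
        field_simp
        first
        | linear_combination R * hs2
        | linear_combination 2 * R * hs2
        | nlinarith [hs2, hs0, hR]
      calc ((R / s : ℝ):ℂ) * 2 = (((R / s) * 2 : ℝ):ℂ) := by push_cast; ring
        _ = ((2 * s * R / 2 : ℝ):ℂ) := by rw [hcoR]
  · intro v htr hAv
    have hμv := hker (2 * Real.sqrt 2 * R) v hAv
    have hco : ((R / s : ℝ):ℂ)⁻¹ * ((2 * Real.sqrt 2 * R / 2 : ℝ):ℂ) = 2 := by
      rw [← hs_def]
      have h1 : (2 * s * R / 2 : ℝ) = s * R := by ring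
      rw [h1]
      rw [← Complex.ofReal_inv]
      rw [← Complex.ofReal_mul]
      have : (R / s)⁻¹ * (s * R) = 2 := by
        rw [inv_div]
        field_simp
        first
        | linear_combination R * hs2
        | linear_combination 2 * R * hs2
        | nlinarith [hs2, hs0, hR]
      rw [this]
      norm_num
    rw [hco] at hμv
    refine ⟨(2⁻¹:ℂ) • (v + gammaId C v), (2⁻¹:ℂ) • (v - gammaId C v), ?_, ?_, ?_, ?_, ?_, ?_, ?_⟩
    · funext i
      simp only [Pi.add_apply, Pi.smul_apply, Pi.sub_apply]
      module
    · intro i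
      simp only [Pi.smul_apply, Pi.add_apply]
      rw [Matrix.trace_smul, Matrix.trace_add, htr i, hGtr v htr i]
      simp
    · intro i
      simp only [Pi.smul_apply, Pi.sub_apply]
      rw [Matrix.trace_smul, Matrix.trace_sub, htr i, hGtr v htr i]
      simp
    · rw [hGsm, hGadd, hGG]
      funext i
      simp only [Pi.smul_apply, Pi.add_apply]
      module
    · rw [hMsm, hMadd, hμv, hMG, hμv, hGsm, hGG]
      funext i
      simp only [Pi.smul_apply, Pi.add_apply]
      module
    · rw [hGsm, hGsub, hGG]
      funext i
      simp only [Pi.smul_apply, Pi.sub_apply, Pi.neg_apply]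
      module
    · rw [hMsm, hMsub, hμv, hMG, hμv, hGsm, hGG]
      funext i
      simp only [Pi.smul_apply, Pi.sub_apply]
      module
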